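/- Suppose μ is a probability measure on S^{n−1} satisfying the ACW(θ, α) condition. Let x ∈ ℝⁿ be nonzero, δ > 0, and let x₀ satisfy ‖x₀ − x‖₂ ≤ δ‖x‖₂ and make an angle less than θ with x. Let X_k denote the k-th iterate of the generalized randomized Kaczmarz method with respect to μ started from x₀, and let Ω be the event that for every k ∈ ℤ₊, X_k makes an angle less than θ with x. Then for every k ∈ ℤ₊, E[‖X_k − x‖₂²·1_Ω] ≤ (1 − α/n)^k·‖x₀ − x‖₂², and moreover P(Ωᶜ) ≤ (δ/sin θ)². -/

import Mathlib

open MeasureTheory ProbabilityTheory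
open scoped RealInnerProductSpace ENNReal BigOperators

noncomputable section

/-- `ℝⁿ` with the Euclidean structure. -/
abbrev Euc (n : ℕ) := EuclideanSpace ℝ (Fin n)

/-- The sign function used in the paper: `sgn t = 1` if `t ≥ 0` and `-1` otherwise. -/
def sgn (t : ℝ) : ℝ := if 0 ≤ t then 1 else -1

/-- One (generalized) Kaczmarz step for phase retrieval with signal `x`,
measurement vector `a`, applied to the current iterate `z`:
`Pz = z + (sign(⟨a,z⟩)·|⟨a,x⟩| − ⟨a,z⟩) a`. -/
def kacStep {n : ℕ} (x a z : Euc n) : Euc n :=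
  z + (sgn ⟪a, z⟫ * |⟪a, x⟫| - ⟪a, z⟫) • a

/-- The randomized Kaczmarz iterates `X_k = P_k ⋯ P_1 x₀`, where step `k+1`
uses the measurement vector `a k`. -/
def kacIter {n : ℕ} (x : Euc n) (a : ℕ → Euc n) (x0 : Euc n) : ℕ → Euc n
  | 0 => x0
  | k + 1 => kacStep x (a k) (kacIter x a x0 k)

/-- The spherical wedge `W_{x,z}`: points of the unit sphere where the signs of
`⟨v,x⟩` and `⟨v,z⟩` disagree. -/
def wedge {n : ℕ} (x z : Euc n) : Set (Euc n) :=
  {v | v ∈ Metric.sphere (0 : Euc n) 1 ∧ sgn ⟪v, x⟫ ≠ sgn ⟪v, z⟫}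

/-- The matrix `E_{a∼μ}[a aᵀ]`. -/
def covMat {n : ℕ} (μ : Measure (Euc n)) : Matrix (Fin n) (Fin n) ℝ :=
  Matrix.of fun i j => ∫ a, a i * a j ∂μ

/-- The matrix `E_{a∼μ}[a aᵀ 1_W(a)]`. -/
def covMatOn {n : ℕ} (μ : Measure (Euc n)) (W : Set (Euc n)) : Matrix (Fin n) (Fin n) ℝ :=
  Matrix.of fun i j => ∫ a in W, a i * a j ∂μ

/-- The quadratic form `vᵀ M v` of a matrix. -/
def quadForm {n : ℕ} (M : Matrix (Fin n) (Fin n) ℝ) (v : Euc n) : ℝ :=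
  ∑ i, ∑ j, v i * M i j * v j

/-- The smallest eigenvalue of a symmetric matrix, via the Rayleigh quotient
characterization `λ_min(M) = inf_{‖v‖=1} vᵀMv`. -/
def lamMin {n : ℕ} (M : Matrix (Fin n) (Fin n) ℝ) : ℝ :=
  ⨅ v : {v : Euc n // ‖v‖ = 1}, quadForm M (v : Euc n)

/-- The largest eigenvalue of a symmetric matrix, via the Rayleigh quotient
characterization `λ_max(M) = sup_{‖v‖=1} vᵀMv`. -/
def lamMax {n : ℕ} (M : Matrix (Fin n) (Fin n) ℝ) : ℝ :=
  ⨆ v : {v : Euc n // ‖v‖ = 1}, quadForm M (v : Euc n)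

/-- The uniform probability measure on the unit sphere `S^{n-1} ⊂ ℝⁿ`:
the normalized `(n-1)`-dimensional Hausdorff measure on the sphere. -/
def sphereUniform (n : ℕ) : Measure (Euc n) :=
  (μH[(n : ℝ) - 1] (Metric.sphere (0 : Euc n) 1))⁻¹ •
    (μH[(n : ℝ) - 1]).restrict (Metric.sphere (0 : Euc n) 1)

/-- The `ACW(θ, α)` (anti-concentration on wedges) condition: for every wedge `W`
of angle less than `θ`, `λ_min(E[aaᵀ] − 4 E[aaᵀ 1_W(a)]) ≥ α/n`. -/
def ACW {n : ℕ} (μ : Measure (Euc n)) (θ α : ℝ) : Prop :=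
  ∀ x z : Euc n, x ≠ 0 → z ≠ 0 → InnerProductGeometry.angle x z < θ →
    lamMin (covMat μ - (4 : ℝ) • covMatOn μ (wedge x z)) ≥ α / n

/-- The hitting time `τ = min{k : X_k ∉ B}` (equal to `⊤ = ∞` if the trajectory
never leaves `B`). -/
def hitTime {n : ℕ} (B : Set (Euc n)) (X : ℕ → Euc n) : ℕ∞ :=
  ⨅ j ∈ {j : ℕ | X j ∉ B}, (j : ℕ∞)

/-- The stopped iterate `X_{τ ∧ k}` where `τ = hitTime B`. -/
def stoppedIter {n : ℕ} (x : Euc n) (a : ℕ → Euc n) (x0 : Euc n) (B : Set (Euc n)) (k : ℕ) :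
    Euc n :=
  kacIter x a x0 (min (hitTime B (kacIter x a x0)) (k : ℕ∞)).toNat

/-- The filtration `(F_k)` where `F_k = σ(a_0, …, a_{k-1})` is generated by the
first `k` measurement vectors. -/
def measFiltration {Ω : Type*} {mΩ : MeasurableSpace Ω} {n : ℕ}
    (A : ℕ → Ω → Euc n) (hA : ∀ i, Measurable (A i)) : Filtration ℕ mΩ where
  seq k := ⨆ j ∈ Set.Iio k, MeasurableSpace.comap (A j) inferInstance
  mono' _ _ hij := biSup_mono fun _ ha => lt_of_lt_of_le ha hij
  le' _ := iSup₂_le fun j _ => measurable_iff_comap_le.mp (hA j)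

/-- The set `S_τ` of `{0,1}`-vectors of length `m` with at most `τ·m` ones. -/
def selVecs (m : ℕ) (τ : ℝ) : Set (Fin m → ℝ) :=
  {s | (∀ i, s i = 0 ∨ s i = 1) ∧ ∑ i, s i ≤ τ * m}

/-- The Euclidean unit ball `B₂ⁿ ⊂ ℝⁿ`. -/
def unitBall (n : ℕ) : Set (Euc n) :=
  {v | ‖v‖ ≤ 1}

/-- A process `(Y_t)_{t ∈ T}` has *mixed tail increments* with respect to a pair of
metrics `(d₁, d₂)`: there are constants `c, C > 0` with
`P(|Y_s − Y_t| ≥ c(√u d₂(s,t) + u d₁(s,t))) ≤ C e^{−u}` for all `s,t,u`. -/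
def HasMixedTailIncrements {Ω T : Type*} [MeasurableSpace Ω] (P : Measure Ω)
    (Y : T → Ω → ℝ) (d₁ d₂ : T → T → ℝ) : Prop :=
  ∃ c C : ℝ, 0 < c ∧ 0 < C ∧ ∀ s t : T, ∀ u : ℝ, 0 < u →
    P {ω | c * (Real.sqrt u * d₂ s t + u * d₁ s t) ≤ |Y s ω - Y t ω|} ≤
      ENNReal.ofReal (C * Real.exp (-u))

/-- An admissible sequence of subsets: `|T₀| = 1` and `|T_k| ≤ 2^(2^k)` for `k ≥ 1`
(the sets are taken nonempty so that distances to them are meaningful). -/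
def Admissible {T : Type*} (Ts : ℕ → Finset T) : Prop :=
  (Ts 0).card = 1 ∧ (∀ k, 1 ≤ k → (Ts k).card ≤ 2 ^ 2 ^ k) ∧ ∀ k, (Ts k).Nonempty

/-- The distance from a point to a finite set, for an abstract metric `d`. -/
def distToFinset {T : Type*} (d : T → T → ℝ) (t : T) (S : Finset T) : ℝ :=
  sInf ((fun u => d t u) '' (S : Set T))

/-- Talagrand's `γ_α` functional of a metric space `(T, d)` (here `T` is a type and
`d` an abstract metric on it): `γ_α(T,d) = inf_{(T_k)} sup_t Σ_k 2^{k/α} d(t, T_k)`,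
the infimum being over admissible sequences. -/
def gammaFunctional {T : Type*} (α : ℝ) (d : T → T → ℝ) : ℝ :=
  ⨅ Ts : {Ts : ℕ → Finset T // Admissible Ts},
    ⨆ t : T, ∑' k : ℕ, (2 : ℝ) ^ ((k : ℝ) / α) * distToFinset d t ((Ts : ℕ → Finset T) k)

end

noncomputable section AuxLemmas

open InnerProductGeometry in
/-! ### Auxiliary lemmas for the proof of `linear_convergence_ACW` -/

lemma sgn_mul_abs (t : ℝ) : sgn t * |t| = t := by
  unfold sgn; split <;> rename_i h
  · rw [abs_of_nonneg h]; ring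
  · rw [abs_of_neg (lt_of_not_ge h)]; ring

lemma sgn_eq_one_or (t : ℝ) : sgn t = 1 ∨ sgn t = -1 := by
  unfold sgn; split <;> simp

lemma sgn_nonneg_iff (t : ℝ) : sgn t = 1 ↔ 0 ≤ t := by
  unfold sgn; split <;> rename_i h
  · simp [h]
  · exact iff_of_false (by norm_num) h

lemma measurable_sgn : Measurable sgn := by
  unfold sgn
  exact Measurable.ite (measurableSet_le measurable_const measurable_id)
    measurable_const measurable_const

lemma kacStep_sub_sq {n : ℕ} (x a z : Euc n) (ha : ‖a‖ = 1) :
    ‖kacStep x a z - x‖ ^ 2 =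
      ‖z - x‖ ^ 2 - ⟪a, z - x⟫ ^ 2 + (sgn ⟪a, z⟫ * |⟪a, x⟫| - ⟪a, x⟫) ^ 2 := by
  have hrw : kacStep x a z - x = (z - x) + (sgn ⟪a, z⟫ * |⟪a, x⟫| - ⟪a, z⟫) • a := by
    unfold kacStep; abel
  rw [hrw, norm_add_sq_real, real_inner_smul_right, norm_smul]
  have h1 : ⟪z - x, a⟫ = ⟪a, z⟫ - ⟪a, x⟫ := by
    rw [real_inner_comm, inner_sub_right]
  have h2 : ⟪a, z - x⟫ = ⟪a, z⟫ - ⟪a, x⟫ := inner_sub_right a z x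
  rw [h1, h2, ha]
  have h3 : |sgn ⟪a, z⟫ * |⟪a, x⟫| - ⟪a, z⟫| ^ 2 = (sgn ⟪a, z⟫ * |⟪a, x⟫| - ⟪a, z⟫) ^ 2 :=
    sq_abs _
  simp only [Real.norm_eq_abs, mul_one]
  rw [h3]; ring

lemma wedge_term_bound {n : ℕ} (x z a : Euc n) (ha : ‖a‖ = 1) :
    (sgn ⟪a, z⟫ * |⟪a, x⟫| - ⟪a, x⟫) ^ 2 ≤
      Set.indicator (wedge x z) (fun v => 4 * ⟪v, z - x⟫ ^ 2) a := by
  by_cases hsg : sgn ⟪a, x⟫ = sgn ⟪a, z⟫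
  · rw [← hsg, sgn_mul_abs]
    simp only [sub_self]
    refine le_trans (by norm_num) (Set.indicator_nonneg ?_ a)
    intro v _; positivity
  · have haW : a ∈ wedge x z := ⟨Metric.mem_sphere.2 (by simpa using ha), fun h => hsg h⟩
    rw [Set.indicator_of_mem haW]
    rw [inner_sub_right]
    rcases sgn_eq_one_or ⟪a, x⟫ with h1 | h1
    · have hx0 : 0 ≤ ⟪a, x⟫ := (sgn_nonneg_iff _).1 h1
      have h2 : sgn ⟪a, z⟫ = -1 := by
        rcases sgn_eq_one_or ⟪a, z⟫ with h | h
        · exact absurd (h1.trans h.symm) hsg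
        · exact h
      have hz0 : ⟪a, z⟫ < 0 := by
        by_contra h
        rw [(sgn_nonneg_iff _).2 (le_of_not_gt h)] at h2; norm_num at h2
      rw [h2]
      nlinarith [abs_of_nonneg hx0]
    · have hx0 : ⟪a, x⟫ < 0 := by
        by_contra h
        rw [(sgn_nonneg_iff _).2 (le_of_not_gt h)] at h1; norm_num at h1
      have h2 : sgn ⟪a, z⟫ = 1 := by
        rcases sgn_eq_one_or ⟪a, z⟫ with h | h
        · exact h
        · exact absurd (h1.trans h.symm) hsg
      have hz0 : 0 ≤ ⟪a, z⟫ := (sgn_nonneg_iff _).1 h2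
      rw [h2]
      nlinarith [abs_of_neg hx0]

lemma kacStep_crude {n : ℕ} (x a z : Euc n) (ha : ‖a‖ = 1) :
    ‖kacStep x a z - x‖ ^ 2 ≤ ‖z - x‖ ^ 2 + 4 * ‖x‖ ^ 2 := by
  rw [kacStep_sub_sq x a z ha]
  have h1 : |⟪a, x⟫| ≤ ‖x‖ := by
    have := abs_real_inner_le_norm a x
    rwa [ha, one_mul] at this
  have h3 : (sgn ⟪a, z⟫ * |⟪a, x⟫| - ⟪a, x⟫) ^ 2 ≤ 4 * ‖x‖ ^ 2 := by
    rcases sgn_eq_one_or ⟪a, z⟫ with h | h <;> rw [h] <;>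
      rcases abs_cases ⟪a, x⟫ with ⟨h4, h5⟩ | ⟨h4, h5⟩ <;> rw [h4] <;> nlinarith
  nlinarith [sq_nonneg ⟪a, z - x⟫]

lemma measurable_inner_pair {n : ℕ} : Measurable (fun p : Euc n × Euc n => ⟪p.1, p.2⟫) :=
  (continuous_inner (𝕜 := ℝ) (E := Euc n)).measurable

lemma measurable_kacStep {n : ℕ} (x : Euc n) :
    Measurable (fun p : Euc n × Euc n => kacStep x p.1 p.2) := by
  have hin : Measurable (fun p : Euc n × Euc n => ⟪p.1, p.2⟫) := measurable_inner_pair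
  have hinx : Measurable (fun p : Euc n × Euc n => |⟪p.1, x⟫|) :=
    (continuous_fst.inner continuous_const).abs.measurable
  have he : Measurable (fun p : Euc n × Euc n => sgn ⟪p.1, p.2⟫ * |⟪p.1, x⟫| - ⟪p.1, p.2⟫) :=
    ((measurable_sgn.comp hin).mul hinx).sub hin
  have hF : Continuous (fun q : ℝ × Euc n × Euc n => q.2.2 + q.1 • q.2.1) :=
    (continuous_snd.comp continuous_snd).add
      (continuous_fst.smul (continuous_fst.comp continuous_snd))
  exact hF.measurable.comp (he.prodMk (measurable_fst.prodMk measurable_snd))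

lemma measurable_angle {n : ℕ} (x : Euc n) :
    Measurable (fun z : Euc n => InnerProductGeometry.angle x z) := by
  have h : (fun z : Euc n => InnerProductGeometry.angle x z) =
      fun z => Real.arccos (⟪x, z⟫ / (‖x‖ * ‖z‖)) := rfl
  rw [h]
  exact Real.continuous_arccos.measurable.comp
    ((continuous_const.inner continuous_id).measurable.div
      ((continuous_const.mul continuous_norm).measurable))

lemma measurableSet_wedge {n : ℕ} (x z : Euc n) : MeasurableSet (wedge x z) := by
  have h1 : MeasurableSet (Metric.sphere (0 : Euc n) 1) :=
    Metric.isClosed_sphere.measurableSet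
  have hf : Measurable (fun v : Euc n => sgn ⟪v, x⟫) :=
    measurable_sgn.comp (continuous_id.inner continuous_const).measurable
  have hg : Measurable (fun v : Euc n => sgn ⟪v, z⟫) :=
    measurable_sgn.comp (continuous_id.inner continuous_const).measurable
  exact h1.inter ((measurableSet_eq_fun hf hg).compl)

lemma kacStep_self {n : ℕ} (x a : Euc n) : kacStep x a x = x := by
  unfold kacStep
  rw [sgn_mul_abs, sub_self, zero_smul, add_zero]

lemma abs_apply_le_norm {n : ℕ} (v : Euc n) (i : Fin n) : |v i| ≤ ‖v‖ := by
  rw [EuclideanSpace.norm_eq]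
  calc |v i| = Real.sqrt (‖v i‖ ^ 2) := by
        rw [Real.norm_eq_abs, Real.sqrt_sq_eq_abs, abs_abs]
  _ ≤ Real.sqrt (∑ j, ‖v j‖ ^ 2) := Real.sqrt_le_sqrt
      (Finset.single_le_sum (f := fun j => ‖v j‖ ^ 2) (fun j _ => sq_nonneg _)
        (Finset.mem_univ i))

lemma inner_eq_sum {n : ℕ} (a w : Euc n) : ⟪a, w⟫ = ∑ i, a i * w i := by
  rw [PiLp.inner_apply]
  simp [RCLike.inner_apply, conj_trivial]
  exact Finset.sum_congr rfl fun i _ => mul_comm _ _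

lemma integral_inner_sq {n : ℕ} (μ : Measure (Euc n))
    (hint : ∀ i j, Integrable (fun a : Euc n => a i * a j) μ) (w : Euc n) :
    ∫ a, ⟪a, w⟫ ^ 2 ∂μ = ∑ i, ∑ j, w i * (∫ a, a i * a j ∂μ) * w j := by
  have h1 : ∀ a : Euc n, ⟪a, w⟫ ^ 2 = ∑ i, ∑ j, w i * (a i * a j) * w j := by
    intro a
    rw [inner_eq_sum, sq, Finset.sum_mul_sum]
    exact Finset.sum_congr rfl fun i _ => Finset.sum_congr rfl fun j _ => by ring
  rw [integral_congr_ae (Filter.Eventually.of_forall h1)]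
  rw [integral_finset_sum _ (fun i _ => integrable_finset_sum _
    (fun j _ => ((hint i j).const_mul (w i)).mul_const (w j)))]
  refine Finset.sum_congr rfl fun i _ => ?_
  rw [integral_finset_sum _ (fun j _ => ((hint i j).const_mul (w i)).mul_const (w j))]
  refine Finset.sum_congr rfl fun j _ => ?_
  rw [integral_mul_const, integral_const_mul]

lemma quadForm_sub_smul {n : ℕ} (A B : Matrix (Fin n) (Fin n) ℝ) (c : ℝ) (w : Euc n) :
    quadForm (A - c • B) w = quadForm A w - c * quadForm B w := by
  unfold quadForm
  rw [Finset.mul_sum, ← Finset.sum_sub_distrib]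
  refine Finset.sum_congr rfl fun i _ => ?_
  rw [Finset.mul_sum, ← Finset.sum_sub_distrib]
  refine Finset.sum_congr rfl fun j _ => ?_
  simp [Matrix.sub_apply, Matrix.smul_apply, smul_eq_mul]
  ring

lemma quadForm_smul {n : ℕ} (M : Matrix (Fin n) (Fin n) ℝ) (c : ℝ) (w : Euc n) :
    quadForm M (c • w) = c ^ 2 * quadForm M w := by
  unfold quadForm
  rw [Finset.mul_sum]
  refine Finset.sum_congr rfl fun i _ => ?_
  rw [Finset.mul_sum]
  refine Finset.sum_congr rfl fun j _ => ?_
  have h1 : (c • w) i = c * w i := rfl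
  have h2 : (c • w) j = c * w j := rfl
  rw [h1, h2]; ring

lemma lamMin_le_quadForm {n : ℕ} (M : Matrix (Fin n) (Fin n) ℝ) {u : Euc n} (hu : ‖u‖ = 1) :
    lamMin M ≤ quadForm M u := by
  have hbdd : BddBelow (Set.range fun v : {v : Euc n // ‖v‖ = 1} => quadForm M (v : Euc n)) := by
    refine ⟨-(∑ i, ∑ j, |M i j|), ?_⟩
    rintro y ⟨v, rfl⟩
    have habs : |quadForm M (v : Euc n)| ≤ ∑ i, ∑ j, |M i j| := by
      refine (Finset.abs_sum_le_sum_abs _ _).trans ?_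
      refine Finset.sum_le_sum fun i _ => ?_
      refine (Finset.abs_sum_le_sum_abs _ _).trans ?_
      refine Finset.sum_le_sum fun j _ => ?_
      rw [abs_mul, abs_mul]
      have h1 : |(v : Euc n) i| ≤ 1 := (abs_apply_le_norm _ i).trans (le_of_eq v.2)
      have h2 : |(v : Euc n) j| ≤ 1 := (abs_apply_le_norm _ j).trans (le_of_eq v.2)
      calc |(v : Euc n) i| * |M i j| * |(v : Euc n) j| ≤ |(v : Euc n) i| * |M i j| :=
            mul_le_of_le_one_right (by positivity) h2
      _ ≤ |M i j| := mul_le_of_le_one_left (abs_nonneg _) h1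
    linarith [neg_abs_le (quadForm M (v : Euc n))]
  exact ciInf_le hbdd ⟨u, hu⟩

lemma hint_entries {n : ℕ} (μ : Measure (Euc n)) [IsProbabilityMeasure μ]
    (hsupp : ∀ᵐ a ∂μ, a ∈ Metric.sphere (0 : Euc n) 1) (i j : Fin n) :
    Integrable (fun a : Euc n => a i * a j) μ := by
  refine Integrable.mono' (integrable_const 1)
    ((((measurable_pi_apply i).comp (WithLp.measurable_ofLp 2 (Fin n → ℝ))).mul ((measurable_pi_apply j).comp (WithLp.measurable_ofLp 2 (Fin n → ℝ)))).aestronglyMeasurable) ?_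
  filter_upwards [hsupp] with a ha
  have h : ‖a‖ = 1 := mem_sphere_zero_iff_norm.1 ha
  rw [Real.norm_eq_abs, abs_mul]
  calc |a i| * |a j| ≤ ‖a‖ * ‖a‖ :=
        mul_le_mul (abs_apply_le_norm a i) (abs_apply_le_norm a j) (abs_nonneg _) (norm_nonneg _)
  _ = 1 := by rw [h]; norm_num

lemma integrable_inner_sq {n : ℕ} (μ : Measure (Euc n)) [IsProbabilityMeasure μ]
    (hsupp : ∀ᵐ a ∂μ, a ∈ Metric.sphere (0 : Euc n) 1) (w : Euc n) :
    Integrable (fun a : Euc n => ⟪a, w⟫ ^ 2) μ := by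
  refine Integrable.mono' (integrable_const (‖w‖ ^ 2))
    (((continuous_id.inner continuous_const).pow 2).measurable.aestronglyMeasurable) ?_
  filter_upwards [hsupp] with a ha
  have h : ‖a‖ = 1 := mem_sphere_zero_iff_norm.1 ha
  rw [Real.norm_eq_abs, abs_pow]
  have h2 := abs_real_inner_le_norm a w
  rw [h, one_mul] at h2
  exact pow_le_pow_left₀ (abs_nonneg _) h2 2

lemma step_exp {n : ℕ} (μ : Measure (Euc n)) [IsProbabilityMeasure μ]
    (hsupp : ∀ᵐ a ∂μ, a ∈ Metric.sphere (0 : Euc n) 1)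
    {θ α : ℝ} (hθ' : θ < Real.pi / 2) (hACW : ACW μ θ α) {x z : Euc n} (hx : x ≠ 0)
    (hz : InnerProductGeometry.angle x z < θ) :
    ∫ a, ‖kacStep x a z - x‖ ^ 2 ∂μ ≤ (1 - α / n) * ‖z - x‖ ^ 2 := by
  have hz0 : z ≠ 0 := by
    rintro rfl
    rw [InnerProductGeometry.angle_zero_right] at hz
    linarith
  by_cases hzx : z = x
  · subst hzx
    simp [kacStep_self]
  set w := z - x with hw
  have hw0 : w ≠ 0 := sub_ne_zero.2 hzx
  set W := wedge x z with hWdef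
  have hWmeas : MeasurableSet W := measurableSet_wedge x z
  have hint : ∀ i j, Integrable (fun a : Euc n => a i * a j) μ := hint_entries μ hsupp
  have hisq : Integrable (fun a : Euc n => ⟪a, w⟫ ^ 2) μ := integrable_inner_sq μ hsupp w
  have hiInd : Integrable (fun a : Euc n => Set.indicator W (fun v => 4 * ⟪v, w⟫ ^ 2) a) μ :=
    (hisq.const_mul 4).indicator hWmeas
  have hIng : Integrable
      (fun a : Euc n => ‖w‖ ^ 2 - ⟪a, w⟫ ^ 2 + Set.indicator W (fun v => 4 * ⟪v, w⟫ ^ 2) a) μ :=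
    ((integrable_const _).sub hisq).add hiInd
  have hLHSmeas : Measurable (fun a : Euc n => ‖kacStep x a z - x‖ ^ 2) := by
    have h : Measurable (fun a : Euc n => kacStep x a z) :=
      (measurable_kacStep x).comp (measurable_id.prodMk measurable_const)
    exact ((h.sub measurable_const).norm.pow measurable_const)
  have hLHSint : Integrable (fun a : Euc n => ‖kacStep x a z - x‖ ^ 2) μ := by
    refine Integrable.mono' (integrable_const (‖w‖ ^ 2 + 4 * ‖x‖ ^ 2))
      hLHSmeas.aestronglyMeasurable ?_
    filter_upwards [hsupp] with a ha
    have h : ‖a‖ = 1 := mem_sphere_zero_iff_norm.1 ha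
    rw [Real.norm_eq_abs, abs_of_nonneg (by positivity)]
    calc ‖kacStep x a z - x‖ ^ 2 ≤ ‖z - x‖ ^ 2 + 4 * ‖x‖ ^ 2 := kacStep_crude x a z h
    _ = ‖w‖ ^ 2 + 4 * ‖x‖ ^ 2 := by rw [hw]
  have hmono : ∀ᵐ a ∂μ, ‖kacStep x a z - x‖ ^ 2 ≤
      ‖w‖ ^ 2 - ⟪a, w⟫ ^ 2 + Set.indicator W (fun v => 4 * ⟪v, w⟫ ^ 2) a := by
    filter_upwards [hsupp] with a ha
    have h : ‖a‖ = 1 := mem_sphere_zero_iff_norm.1 ha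
    rw [kacStep_sub_sq x a z h]
    have hwb := wedge_term_bound x z a h
    rw [hw]
    linarith
  have hle1 : ∫ a, ‖kacStep x a z - x‖ ^ 2 ∂μ ≤
      ∫ a, (‖w‖ ^ 2 - ⟪a, w⟫ ^ 2 + Set.indicator W (fun v => 4 * ⟪v, w⟫ ^ 2) a) ∂μ :=
    integral_mono_ae hLHSint hIng hmono
  have hsplit : ∫ a, (‖w‖ ^ 2 - ⟪a, w⟫ ^ 2 + Set.indicator W (fun v => 4 * ⟪v, w⟫ ^ 2) a) ∂μ =
      ‖w‖ ^ 2 - (∫ a, ⟪a, w⟫ ^ 2 ∂μ) + 4 * ∫ a in W, ⟪a, w⟫ ^ 2 ∂μ := by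
    have h12 : Integrable (fun a : Euc n => ‖w‖ ^ 2 - ⟪a, w⟫ ^ 2) μ :=
      (integrable_const (‖w‖ ^ 2)).sub hisq
    rw [integral_add h12 hiInd,
      integral_sub (integrable_const (‖w‖ ^ 2)) hisq, integral_const, probReal_univ,
      integral_indicator hWmeas, integral_const_mul]
    simp
  have hE1 : ∫ a, ⟪a, w⟫ ^ 2 ∂μ = quadForm (covMat μ) w := by
    rw [integral_inner_sq μ hint w]; rfl
  have hE2 : ∫ a in W, ⟪a, w⟫ ^ 2 ∂μ = quadForm (covMatOn μ W) w := by
    rw [integral_inner_sq (μ.restrict W) (fun i j => (hint i j).restrict) w]; rfl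
  set M := covMat μ - (4 : ℝ) • covMatOn μ W with hM
  have hquad : α / n ≤ lamMin M := hACW x z hx hz0 hz
  have hu : ‖(‖w‖⁻¹ • w : Euc n)‖ = 1 := norm_smul_inv_norm hw0
  have hqu : α / n ≤ quadForm M (‖w‖⁻¹ • w) := hquad.trans (lamMin_le_quadForm M hu)
  have hscale : quadForm M w = ‖w‖ ^ 2 * quadForm M (‖w‖⁻¹ • w) := by
    rw [quadForm_smul]
    have hnw : ‖w‖ ≠ 0 := norm_ne_zero_iff.2 hw0
    field_simp
  have hq : α / n * ‖w‖ ^ 2 ≤ quadForm M w := by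
    rw [hscale]
    have h1 : 0 ≤ ‖w‖ ^ 2 := sq_nonneg _
    nlinarith
  have hsub : quadForm M w = quadForm (covMat μ) w - 4 * quadForm (covMatOn μ W) w :=
    quadForm_sub_smul _ _ _ _
  calc ∫ a, ‖kacStep x a z - x‖ ^ 2 ∂μ ≤
      ‖w‖ ^ 2 - (∫ a, ⟪a, w⟫ ^ 2 ∂μ) + 4 * ∫ a in W, ⟪a, w⟫ ^ 2 ∂μ := by
        rw [← hsplit]; exact hle1
  _ = ‖w‖ ^ 2 - quadForm M w := by rw [hE1, hE2, hsub]; ring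
  _ ≤ ‖w‖ ^ 2 - α / n * ‖w‖ ^ 2 := by linarith
  _ = (1 - α / n) * ‖z - x‖ ^ 2 := by rw [← hw]; ring

section Tuples

variable {n : ℕ}

/-- Tuple version of the Kaczmarz iterate. -/
def XF (x x0 : Euc n) : (k : ℕ) → (Fin k → Euc n) → Euc n
  | 0, _ => x0
  | k + 1, v => kacStep x (v (Fin.last k)) (XF x x0 k (fun i => v i.castSucc))

/-- One step of the stopped process. -/
def stepY (x : Euc n) (θ : ℝ) (a z : Euc n) : Euc n :=
  if InnerProductGeometry.angle x z < θ then kacStep x a z else z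

/-- Tuple version of the stopped iterate. -/
def YF (x x0 : Euc n) (θ : ℝ) : (k : ℕ) → (Fin k → Euc n) → Euc n
  | 0, _ => x0
  | k + 1, v => stepY x θ (v (Fin.last k)) (YF x x0 θ k (fun i => v i.castSucc))

/-- The "good" cone of directions within angle `θ` of `x`. -/
def goodSet (x : Euc n) (θ : ℝ) : Set (Euc n) :=
  {z | InnerProductGeometry.angle x z < θ}

lemma measurableSet_goodSet (x : Euc n) (θ : ℝ) :
    MeasurableSet (goodSet x θ) :=
  measurableSet_lt (measurable_angle x) measurable_const

lemma measurable_stepY (x : Euc n) (θ : ℝ) :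
    Measurable (fun p : Euc n × Euc n => stepY x θ p.1 p.2) := by
  unfold stepY
  exact Measurable.ite (measurable_snd (measurableSet_goodSet x θ))
    (measurable_kacStep x) measurable_snd

lemma measurable_XF (x x0 : Euc n) (k : ℕ) : Measurable (XF x x0 k) := by
  induction k with
  | zero => exact measurable_const
  | succ k ih =>
    have h1 : Measurable fun v : Fin (k+1) → Euc n => v (Fin.last k) :=
      measurable_pi_apply (Fin.last k)
    have h2 : Measurable fun v : Fin (k+1) → Euc n => (fun i : Fin k => v i.castSucc) :=
      measurable_pi_lambda _ fun i => measurable_pi_apply _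
    have h3 : Measurable fun v : Fin (k+1) → Euc n => XF x x0 k (fun i => v i.castSucc) :=
      ih.comp h2
    exact (measurable_kacStep x).comp (h1.prodMk h3)

lemma measurable_YF (x x0 : Euc n) (θ : ℝ) (k : ℕ) : Measurable (YF x x0 θ k) := by
  induction k with
  | zero => exact measurable_const
  | succ k ih =>
    have h1 : Measurable fun v : Fin (k+1) → Euc n => v (Fin.last k) :=
      measurable_pi_apply (Fin.last k)
    have h2 : Measurable fun v : Fin (k+1) → Euc n => (fun i : Fin k => v i.castSucc) :=
      measurable_pi_lambda _ fun i => measurable_pi_apply _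
    have h3 : Measurable fun v : Fin (k+1) → Euc n => YF x x0 θ k (fun i => v i.castSucc) :=
      ih.comp h2
    have h4 : YF x x0 θ (k+1) = fun v : Fin (k+1) → Euc n =>
        (fun p : Euc n × Euc n => stepY x θ p.1 p.2)
          (v (Fin.last k), YF x x0 θ k (fun i => v i.castSucc)) := rfl
    rw [h4]
    exact (measurable_stepY x θ).comp (h1.prodMk h3)

lemma tuple_restrict (a : ℕ → Euc n) (k : ℕ) :
    (fun i : Fin k => (fun j : Fin (k + 1) => a j) i.castSucc) = fun i : Fin k => a i := by
  funext i; simp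

lemma XF_eq (x x0 : Euc n) (a : ℕ → Euc n) (k : ℕ) :
    XF x x0 k (fun i : Fin k => a i) = kacIter x a x0 k := by
  induction k with
  | zero => rfl
  | succ k ih =>
    show kacStep x ((fun j : Fin (k+1) => a j) (Fin.last k))
      (XF x x0 k (fun i => (fun j : Fin (k+1) => a j) i.castSucc)) = _
    rw [tuple_restrict, ih]
    rfl

lemma YF_succ (x x0 : Euc n) (θ : ℝ) (a : ℕ → Euc n) (k : ℕ) :
    YF x x0 θ (k + 1) (fun i : Fin (k + 1) => a i) =
      stepY x θ (a k) (YF x x0 θ k (fun i : Fin k => a i)) := by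
  show stepY x θ ((fun j : Fin (k+1) => a j) (Fin.last k))
      (YF x x0 θ k (fun i => (fun j : Fin (k+1) => a j) i.castSucc)) = _
  rw [tuple_restrict]
  rfl

lemma XF_bound (x x0 : Euc n) (k : ℕ) (v : Fin k → Euc n)
    (hv : ∀ i, ‖v i‖ = 1) :
    ‖XF x x0 k v - x‖ ^ 2 ≤ ‖x0 - x‖ ^ 2 + 4 * k * ‖x‖ ^ 2 := by
  induction k with
  | zero => simp [XF]
  | succ k ih =>
    have h1 := kacStep_crude x (v (Fin.last k)) (XF x x0 k (fun i => v i.castSucc))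
      (hv (Fin.last k))
    have h2 := ih (fun i => v i.castSucc) (fun i => hv _)
    show ‖kacStep x (v (Fin.last k)) (XF x x0 k (fun i => v i.castSucc)) - x‖ ^ 2 ≤ _
    push_cast
    nlinarith [sq_nonneg ‖x‖]

lemma YF_bound (x x0 : Euc n) (θ : ℝ) (k : ℕ) (v : Fin k → Euc n)
    (hv : ∀ i, ‖v i‖ = 1) :
    ‖YF x x0 θ k v - x‖ ^ 2 ≤ ‖x0 - x‖ ^ 2 + 4 * k * ‖x‖ ^ 2 := by
  induction k with
  | zero => simp [YF]
  | succ k ih =>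
    have h2 := ih (fun i => v i.castSucc) (fun i => hv _)
    show ‖stepY x θ (v (Fin.last k)) (YF x x0 θ k (fun i => v i.castSucc)) - x‖ ^ 2 ≤ _
    unfold stepY
    split
    · have h1 := kacStep_crude x (v (Fin.last k)) (YF x x0 θ k (fun i => v i.castSucc))
        (hv (Fin.last k))
      push_cast
      nlinarith [sq_nonneg ‖x‖]
    · push_cast
      nlinarith [sq_nonneg ‖x‖]

/-- The set of `k`-tuples all of whose partial iterates stay in the good cone. -/
def GTle (x x0 : Euc n) (θ : ℝ) (k : ℕ) : Set (Fin k → Euc n) :=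
  {v | ∀ (j : ℕ) (h : j ≤ k), InnerProductGeometry.angle x
    (XF x x0 j (fun i : Fin j => v ⟨i.1, lt_of_lt_of_le i.2 h⟩)) < θ}

lemma measurableSet_GTle (x x0 : Euc n) (θ : ℝ) (k : ℕ) :
    MeasurableSet (GTle x x0 θ k) := by
  have h : GTle x x0 θ k = ⋂ (j : ℕ), ⋂ (h : j ≤ k),
      (fun v : Fin k → Euc n =>
        XF x x0 j (fun i : Fin j => v ⟨i.1, lt_of_lt_of_le i.2 h⟩)) ⁻¹' goodSet x θ := by
    ext v
    simp only [GTle, Set.mem_setOf_eq, Set.mem_iInter, Set.mem_preimage, goodSet]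
  rw [h]
  refine MeasurableSet.iInter fun j => MeasurableSet.iInter fun h => ?_
  have hm : Measurable (fun v : Fin k → Euc n =>
      XF x x0 j (fun i : Fin j => v ⟨i.1, lt_of_lt_of_le i.2 h⟩)) := by
    have hr : Measurable (fun v : Fin k → Euc n =>
        (fun i : Fin j => v ⟨i.1, lt_of_lt_of_le i.2 h⟩)) :=
      measurable_pi_lambda _ fun i => measurable_pi_apply _
    exact (measurable_XF x x0 j).comp hr
  exact hm (measurableSet_goodSet x θ)

lemma mem_GTle_iff (x x0 : Euc n) (θ : ℝ) (k : ℕ) (a : ℕ → Euc n) :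
    ((fun i : Fin k => a i) ∈ GTle x x0 θ k) ↔
      ∀ j ≤ k, InnerProductGeometry.angle x (kacIter x a x0 j) < θ := by
  unfold GTle
  simp only [Set.mem_setOf_eq]
  constructor
  · intro h j hj
    have h2 := h j hj
    rwa [show (fun i : Fin j => (fun i : Fin k => a i) ⟨i.1, lt_of_lt_of_le i.2 hj⟩) =
      (fun i : Fin j => a i) from rfl, XF_eq] at h2
  · intro h j hj
    rw [show (fun i : Fin j => (fun i : Fin k => a i) ⟨i.1, lt_of_lt_of_le i.2 hj⟩) =
      (fun i : Fin j => a i) from rfl, XF_eq]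
    exact h j hj

end Tuples

section Indep

variable {n : ℕ} {Ω : Type} [MeasurableSpace Ω]

lemma indep_tuple (P : Measure Ω) [IsProbabilityMeasure P]
    (A : ℕ → Ω → Euc n) (hmeas : ∀ i, Measurable (A i))
    (hindep : iIndepFun A P) (k : ℕ) :
    IndepFun (fun ω => fun i : Fin k => A i ω) (A k) P := by
  have hST : Disjoint (Finset.range k) ({k} : Finset ℕ) := by
    simp only [Finset.disjoint_left, Finset.mem_range, Finset.mem_singleton]
    omega
  have h := hindep.indepFun_finset (Finset.range k) {k} hST hmeas
  have hφ : Measurable (fun g : ((i : Finset.range k) → Euc n) =>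
      (fun i : Fin k => g ⟨(i : ℕ), Finset.mem_range.2 i.isLt⟩)) :=
    measurable_pi_lambda _ fun i => measurable_pi_apply _
  have hψ : Measurable (fun g : ((i : ({k} : Finset ℕ)) → Euc n) =>
      g ⟨k, Finset.mem_singleton_self k⟩) := measurable_pi_apply _
  have h2 := h.comp hφ hψ
  exact h2

lemma map_pair_eq (P : Measure Ω) [IsProbabilityMeasure P]
    (μ : Measure (Euc n)) [IsProbabilityMeasure μ]
    (A : ℕ → Ω → Euc n) (hmeas : ∀ i, Measurable (A i))
    (hindep : iIndepFun A P)
    (hdist : ∀ i, Measure.map (A i) P = μ) (k : ℕ) :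
    Measure.map (fun ω => ((fun i : Fin k => A i ω), A k ω)) P =
      (Measure.map (fun ω => fun i : Fin k => A i ω) P).prod μ := by
  have hVk : Measurable (fun ω => fun i : Fin k => A i ω) :=
    measurable_pi_lambda _ fun i => hmeas i
  rw [← hdist k]
  exact (indepFun_iff_map_prod_eq_prod_map_map hVk.aemeasurable
    (hmeas k).aemeasurable).1 (indep_tuple P A hmeas hindep k)

lemma ae_units (P : Measure Ω) [IsProbabilityMeasure P]
    (μ : Measure (Euc n)) [IsProbabilityMeasure μ]
    (hsupp : ∀ᵐ a ∂μ, a ∈ Metric.sphere (0 : Euc n) 1)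
    (A : ℕ → Ω → Euc n) (hmeas : ∀ i, Measurable (A i))
    (hdist : ∀ i, Measure.map (A i) P = μ) :
    ∀ᵐ ω ∂P, ∀ i, ‖A i ω‖ = 1 := by
  rw [MeasureTheory.ae_all_iff]
  intro i
  have h1 : ∀ᵐ a ∂(Measure.map (A i) P), a ∈ Metric.sphere (0 : Euc n) 1 := by
    rw [hdist i]; exact hsupp
  have h2 := (ae_map_iff (hmeas i).aemeasurable
    Metric.isClosed_sphere.measurableSet).1 h1
  filter_upwards [h2] with ω hω
  exact mem_sphere_zero_iff_norm.1 hω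

lemma measurableSet_unit_tuples (k : ℕ) :
    MeasurableSet {v : Fin k → Euc n | ∀ i, ‖v i‖ = 1} := by
  have h : {v : Fin k → Euc n | ∀ i, ‖v i‖ = 1} =
      ⋂ i, (fun v : Fin k → Euc n => ‖v i‖) ⁻¹' {1} := by
    ext v; simp
  rw [h]
  exact MeasurableSet.iInter fun i =>
    ((measurable_pi_apply i).norm) (measurableSet_singleton 1)

lemma fubini_step (P : Measure Ω) [IsProbabilityMeasure P]
    (μ : Measure (Euc n)) [IsProbabilityMeasure μ]
    (hsupp : ∀ᵐ a ∂μ, a ∈ Metric.sphere (0 : Euc n) 1)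
    (A : ℕ → Ω → Euc n) (hmeas : ∀ i, Measurable (A i))
    (hindep : iIndepFun A P)
    (hdist : ∀ i, Measure.map (A i) P = μ)
    (k : ℕ) (G : (Fin k → Euc n) × Euc n → ℝ) (hG : Measurable G)
    (C : ℝ) (hbd : ∀ v a, (∀ i, ‖v i‖ = 1) → ‖a‖ = 1 → |G (v, a)| ≤ C) :
    ∫ ω, G (fun i : Fin k => A i ω, A k ω) ∂P =
      ∫ ω, ∫ a, G (fun i : Fin k => A i ω, a) ∂μ ∂P := by
  set Vk : Ω → (Fin k → Euc n) := fun ω => fun i : Fin k => A i ω with hVkdef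
  have hVk : Measurable Vk := measurable_pi_lambda _ fun i => hmeas i
  set ν : Measure (Fin k → Euc n) := Measure.map Vk P with hν
  have hνprob : IsProbabilityMeasure ν := Measure.isProbabilityMeasure_map hVk.aemeasurable
  have hmap : Measure.map (fun ω => (Vk ω, A k ω)) P = ν.prod μ :=
    map_pair_eq P μ A hmeas hindep hdist k
  have hνae : ∀ᵐ v ∂ν, ∀ i, ‖v i‖ = 1 := by
    rw [hν, ae_map_iff hVk.aemeasurable (measurableSet_unit_tuples k)]
    filter_upwards [ae_units P μ hsupp A hmeas hdist] with ω hω i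
    exact hω i
  have hμae : ∀ᵐ a ∂μ, ‖a‖ = 1 := by
    filter_upwards [hsupp] with a ha; exact mem_sphere_zero_iff_norm.1 ha
  have hprodae : ∀ᵐ p ∂(ν.prod μ), (∀ i, ‖p.1 i‖ = 1) ∧ ‖p.2‖ = 1 := by
    have h1 : ∀ᵐ p ∂(ν.prod μ), (∀ i, ‖p.1 i‖ = 1) := by
      have h := Measure.ae_prod_iff_ae_ae (μ := ν) (ν := μ)
        (p := fun p : (Fin k → Euc n) × Euc n => ∀ i, ‖p.1 i‖ = 1) ?_
      · rw [h]
        filter_upwards [hνae] with v hv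
        exact Filter.Eventually.of_forall fun a => hv
      · exact measurable_fst (measurableSet_unit_tuples k)
    have h2 : ∀ᵐ p ∂(ν.prod μ), ‖p.2‖ = 1 := by
      have h := Measure.ae_prod_iff_ae_ae (μ := ν) (ν := μ)
        (p := fun p : (Fin k → Euc n) × Euc n => ‖p.2‖ = 1) ?_
      · rw [h]
        exact Filter.Eventually.of_forall fun v => hμae
      · exact measurable_snd.norm (measurableSet_singleton 1)
    filter_upwards [h1, h2] with p hp1 hp2
    exact ⟨hp1, hp2⟩
  have hGint : Integrable G (ν.prod μ) := by
    refine Integrable.mono' (integrable_const C) hG.aestronglyMeasurable ?_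
    filter_upwards [hprodae] with p hp
    rw [Real.norm_eq_abs]
    exact hbd p.1 p.2 hp.1 hp.2
  calc ∫ ω, G (Vk ω, A k ω) ∂P = ∫ p, G p ∂(ν.prod μ) := by
        rw [← hmap]
        exact (integral_map (hVk.prodMk (hmeas k)).aemeasurable
          hG.aestronglyMeasurable).symm
  _ = ∫ v, ∫ a, G (v, a) ∂μ ∂ν := integral_prod G hGint
  _ = ∫ ω, ∫ a, G (Vk ω, a) ∂μ ∂P := by
        exact integral_map hVk.aemeasurable
          (hG.stronglyMeasurable.integral_prod_right').aestronglyMeasurable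

end Indep

lemma dist_ge_of_angle_ge {n : ℕ} {x z : Euc n} {θ : ℝ} (hθ : 0 < θ)
    (hθ' : θ < Real.pi / 2) (h : ¬ InnerProductGeometry.angle x z < θ) :
    (‖x‖ * Real.sin θ) ^ 2 ≤ ‖z - x‖ ^ 2 := by
  set φ := InnerProductGeometry.angle x z with hφ
  have hφθ : θ ≤ φ := not_lt.1 h
  have hφπ : φ ≤ Real.pi := InnerProductGeometry.angle_le_pi x z
  have hinner : ⟪x, z⟫ = Real.cos φ * (‖x‖ * ‖z‖) :=
    (InnerProductGeometry.cos_angle_mul_norm_mul_norm x z).symm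
  have hnorm : ‖z - x‖ ^ 2 = ‖z‖ ^ 2 - 2 * (Real.cos φ * (‖x‖ * ‖z‖)) + ‖x‖ ^ 2 := by
    rw [norm_sub_sq_real, real_inner_comm, hinner]
  have hs1 : Real.sin θ ≤ 1 := Real.sin_le_one θ
  have hs0 : 0 < Real.sin θ :=
    Real.sin_pos_of_pos_of_lt_pi hθ (lt_trans hθ' (by linarith [Real.pi_pos]))
  rw [hnorm]
  by_cases hc : Real.cos φ ≤ 0
  · have f1 : 0 ≤ (-Real.cos φ) * (‖x‖ * ‖z‖) :=
      mul_nonneg (neg_nonneg.2 hc) (mul_nonneg (norm_nonneg x) (norm_nonneg z))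
    have f2 : Real.sin θ ^ 2 ≤ 1 := by nlinarith
    nlinarith [f1, f2, sq_nonneg ‖z‖, sq_nonneg ‖x‖]
  · push_neg at hc
    have hφ2 : Real.cos φ ≤ Real.cos θ :=
      Real.cos_le_cos_of_nonneg_of_le_pi (le_of_lt hθ) hφπ hφθ
    have hcθ : 0 < Real.cos θ := lt_of_lt_of_le hc hφ2
    have hsin : Real.sin θ ^ 2 = 1 - Real.cos θ ^ 2 := Real.sin_sq θ
    have h5 : Real.cos φ ^ 2 ≤ Real.cos θ ^ 2 := by nlinarith
    nlinarith [sq_nonneg (‖z‖ - Real.cos φ * ‖x‖), h5, sq_nonneg ‖x‖, hsin]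

end AuxLemmas

set_option maxHeartbeats 2000000 in
/-- **Theorem (Linear convergence for an ACW measure).** Suppose `μ` is an
`ACW(θ, α)` probability measure on `S^{n−1}`, `x ≠ 0`, `δ > 0`, and `x₀` satisfies
`‖x₀ − x‖ ≤ δ‖x‖` and makes angle less than `θ` with `x`. Let `X_k` be the
generalized randomized Kaczmarz iterates from i.i.d. draws from `μ`, and let `Ω`
be the event that every `X_k` makes angle less than `θ` with `x`. Then
`E[‖X_k − x‖² 1_Ω] ≤ (1 − α/n)^k ‖x₀ − x‖²` for all `k`, and
`P(Ωᶜ) ≤ (δ/sin θ)²`. -/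
theorem linear_convergence_ACW {n : ℕ} (μ : Measure (Euc n)) [IsProbabilityMeasure μ]
    (hsupp : ∀ᵐ a ∂μ, a ∈ Metric.sphere (0 : Euc n) 1)
    (θ α : ℝ) (hα : 0 < α) (hθ : 0 < θ) (hθ' : θ < Real.pi / 2) (hACW : ACW μ θ α)
    (x : Euc n) (hx : x ≠ 0) (δ : ℝ) (hδ : 0 < δ)
    {Ω : Type} [MeasurableSpace Ω] (P : Measure Ω) [IsProbabilityMeasure P]
    (A : ℕ → Ω → Euc n) (hmeas : ∀ i, Measurable (A i))
    (hindep : iIndepFun A P)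
    (hdist : ∀ i, Measure.map (A i) P = μ)
    (x0 : Euc n) (hx0 : ‖x0 - x‖ ≤ δ * ‖x‖)
    (hx0θ : InnerProductGeometry.angle x x0 < θ) :
    (∀ k : ℕ,
      ∫ ω in {ω | ∀ j : ℕ,
          InnerProductGeometry.angle x (kacIter x (fun i => A i ω) x0 j) < θ},
        ‖kacIter x (fun i => A i ω) x0 k - x‖ ^ 2 ∂P ≤
        (1 - α / n) ^ k * ‖x0 - x‖ ^ 2) ∧
    P {ω | ∀ j : ℕ,
        InnerProductGeometry.angle x (kacIter x (fun i => A i ω) x0 j) < θ}ᶜ ≤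
      ENNReal.ofReal ((δ / Real.sin θ) ^ 2) := by
  classical
  have hn : 0 < n := by
    rcases Nat.eq_zero_or_pos n with h | h
    · subst h
      exact absurd (Subsingleton.elim x 0) hx
    · exact h
  have hnR : (0 : ℝ) < n := by exact_mod_cast hn
  have hxn : 0 < ‖x‖ := norm_pos_iff.2 hx
  have hint : ∀ i j, Integrable (fun a : Euc n => a i * a j) μ := hint_entries μ hsupp
  -- `α / n ≤ 1`
  have hαn1 : α / n ≤ 1 := by
    set u0 : Euc n := EuclideanSpace.single (⟨0, hn⟩ : Fin n) (1 : ℝ) with hu0def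
    have hu0 : ‖u0‖ = 1 := by
      rw [hu0def, EuclideanSpace.norm_single]; norm_num
    have h1 : α / n ≤ lamMin (covMat μ - (4 : ℝ) • covMatOn μ (wedge x x)) :=
      hACW x x hx hx (by rw [InnerProductGeometry.angle_self hx]; exact hθ)
    have h2 : lamMin (covMat μ - (4 : ℝ) • covMatOn μ (wedge x x)) ≤
        quadForm (covMat μ - (4 : ℝ) • covMatOn μ (wedge x x)) u0 :=
      lamMin_le_quadForm _ hu0
    have h3 : quadForm (covMat μ - (4 : ℝ) • covMatOn μ (wedge x x)) u0 =
        quadForm (covMat μ) u0 - 4 * quadForm (covMatOn μ (wedge x x)) u0 :=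
      quadForm_sub_smul _ _ _ _
    have hE : ∫ a, ⟪a, u0⟫ ^ 2 ∂μ = quadForm (covMat μ) u0 := by
      rw [integral_inner_sq μ hint u0]; rfl
    have h4 : quadForm (covMat μ) u0 ≤ 1 := by
      rw [← hE]
      calc ∫ a, ⟪a, u0⟫ ^ 2 ∂μ ≤ ∫ _, (1 : ℝ) ∂μ := by
            refine integral_mono_ae (integrable_inner_sq μ hsupp u0) (integrable_const 1) ?_
            filter_upwards [hsupp] with a ha
            have hna : ‖a‖ = 1 := mem_sphere_zero_iff_norm.1 ha
            have h5 := abs_real_inner_le_norm a u0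
            rw [hna, one_mul, hu0] at h5
            nlinarith [sq_abs ⟪a, u0⟫, abs_nonneg ⟪a, u0⟫]
      _ = 1 := by simp
    have hE2 : ∫ a in wedge x x, ⟪a, u0⟫ ^ 2 ∂μ = quadForm (covMatOn μ (wedge x x)) u0 := by
      rw [integral_inner_sq (μ.restrict (wedge x x)) (fun i j => (hint i j).restrict) u0]; rfl
    have h5 : 0 ≤ quadForm (covMatOn μ (wedge x x)) u0 := by
      rw [← hE2]; exact integral_nonneg fun a => sq_nonneg _
    linarith
  set r : ℝ := 1 - α / n with hr
  have hr0 : 0 ≤ r := by rw [hr]; linarith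
  have hαn0 : 0 ≤ α / n := div_nonneg hα.le hnR.le
  -- measurability of the iterates
  have hVk : ∀ k, Measurable (fun ω => fun i : Fin k => A i ω) := fun k =>
    measurable_pi_lambda _ fun i => hmeas i
  have hXmeas : ∀ k, Measurable (fun ω => kacIter x (fun i => A i ω) x0 k) := by
    intro k
    have h : (fun ω => kacIter x (fun i => A i ω) x0 k) =
        (XF x x0 k) ∘ (fun ω => fun i : Fin k => A i ω) := by
      funext ω; exact (XF_eq x x0 (fun i => A i ω) k).symm
    rw [h]; exact (measurable_XF x x0 k).comp (hVk k)
  have hYmeas : ∀ k, Measurable (fun ω => YF x x0 θ k (fun i : Fin k => A i ω)) := fun k =>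
    (measurable_YF x x0 θ k).comp (hVk k)
  have hAE : ∀ᵐ ω ∂P, ∀ i, ‖A i ω‖ = 1 := ae_units P μ hsupp A hmeas hdist
  have hXint : ∀ k, Integrable (fun ω => ‖kacIter x (fun i => A i ω) x0 k - x‖ ^ 2) P := by
    intro k
    refine Integrable.mono' (integrable_const (‖x0 - x‖ ^ 2 + 4 * k * ‖x‖ ^ 2))
      (((hXmeas k).sub measurable_const).norm.pow measurable_const).aestronglyMeasurable ?_
    filter_upwards [hAE] with ω hω
    rw [Real.norm_eq_abs, abs_of_nonneg (sq_nonneg _)]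
    have h := XF_bound x x0 k (fun i : Fin k => A i ω) (fun i => hω i)
    rwa [XF_eq x x0 (fun i => A i ω) k] at h
  have hYint : ∀ k, Integrable (fun ω => ‖YF x x0 θ k (fun i : Fin k => A i ω) - x‖ ^ 2) P := by
    intro k
    refine Integrable.mono' (integrable_const (‖x0 - x‖ ^ 2 + 4 * k * ‖x‖ ^ 2))
      (((hYmeas k).sub measurable_const).norm.pow measurable_const).aestronglyMeasurable ?_
    filter_upwards [hAE] with ω hω
    rw [Real.norm_eq_abs, abs_of_nonneg (sq_nonneg _)]
    exact YF_bound x x0 θ k (fun i : Fin k => A i ω) (fun i => hω i)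
  -- the increasing family of good events
  set S : ℕ → Set Ω := fun m =>
    {ω | ∀ j, j < m → InnerProductGeometry.angle x (kacIter x (fun i => A i ω) x0 j) < θ}
    with hSdef
  have hSmeas : ∀ m, MeasurableSet (S m) := by
    intro m
    have h : S m = ⋂ (j : ℕ), ⋂ (_ : j < m),
        (fun ω => kacIter x (fun i => A i ω) x0 j) ⁻¹' (goodSet x θ) := by
      ext ω
      simp only [hSdef, Set.mem_setOf_eq, Set.mem_iInter, Set.mem_preimage, goodSet]
    rw [h]
    exact MeasurableSet.iInter fun j => MeasurableSet.iInter fun _ =>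
      (hXmeas j) (measurableSet_goodSet x θ)
  have hSmono : ∀ m, S (m + 1) ⊆ S m := fun m ω hω j hj => hω j (by omega)
  have hEvS : ∀ m, {ω | ∀ j : ℕ,
      InnerProductGeometry.angle x (kacIter x (fun i => A i ω) x0 j) < θ} ⊆ S m :=
    fun m ω hω j _ => hω j
  have hSsucc_iff : ∀ (k : ℕ) (ω : Ω), ω ∈ S (k + 1) ↔
      (fun i : Fin k => A i ω) ∈ GTle x x0 θ k := by
    intro k ω
    rw [mem_GTle_iff x x0 θ k (fun i => A i ω)]
    constructor
    · intro h j hj; exact h j (by omega)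
    · intro h j hj; exact h j (by omega)
  -- the one-step inequality for the set integrals
  have hkey : ∀ k : ℕ,
      ∫ ω in S (k + 1), ‖kacIter x (fun i => A i ω) x0 (k + 1) - x‖ ^ 2 ∂P ≤
        r * ∫ ω in S k, ‖kacIter x (fun i => A i ω) x0 k - x‖ ^ 2 ∂P := by
    intro k
    set G : (Fin k → Euc n) × Euc n → ℝ := fun p =>
      if p.1 ∈ GTle x x0 θ k then ‖kacStep x p.2 (XF x x0 k p.1) - x‖ ^ 2 else 0 with hGdef
    have hGmeas : Measurable G := by
      refine Measurable.ite (measurable_fst (measurableSet_GTle x x0 θ k)) ?_ measurable_const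
      have hk1 : Measurable fun p : (Fin k → Euc n) × Euc n => kacStep x p.2 (XF x x0 k p.1) :=
        (measurable_kacStep x).comp (measurable_snd.prodMk
          ((measurable_XF x x0 k).comp measurable_fst))
      exact ((hk1.sub measurable_const).norm.pow measurable_const)
    have hGnn : ∀ p, 0 ≤ G p := by
      intro p; rw [hGdef]; dsimp only; split
      · exact sq_nonneg _
      · exact le_refl 0
    have hGbd : ∀ v a, (∀ i, ‖v i‖ = 1) → ‖a‖ = 1 →
        |G (v, a)| ≤ ‖x0 - x‖ ^ 2 + 4 * (k + 1) * ‖x‖ ^ 2 := by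
      intro v a hv ha
      rw [hGdef]; dsimp only
      split
      · rw [abs_of_nonneg (sq_nonneg _)]
        calc ‖kacStep x a (XF x x0 k v) - x‖ ^ 2 ≤ ‖XF x x0 k v - x‖ ^ 2 + 4 * ‖x‖ ^ 2 :=
              kacStep_crude _ _ _ ha
        _ ≤ ‖x0 - x‖ ^ 2 + 4 * (k + 1) * ‖x‖ ^ 2 := by
              have hb := XF_bound x x0 k v hv
              push_cast
              nlinarith [sq_nonneg ‖x‖]
      · rw [abs_zero]; positivity
    have e1 : ∫ ω in S (k + 1), ‖kacIter x (fun i => A i ω) x0 (k + 1) - x‖ ^ 2 ∂P =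
        ∫ ω, G (fun i : Fin k => A i ω, A k ω) ∂P := by
      rw [← integral_indicator (hSmeas (k + 1))]
      refine integral_congr_ae (Filter.Eventually.of_forall fun ω => ?_)
      by_cases hω : ω ∈ S (k + 1)
      · rw [Set.indicator_of_mem hω, hGdef]
        dsimp only
        rw [if_pos ((hSsucc_iff k ω).1 hω), XF_eq x x0 (fun i => A i ω) k]
        rfl
      · rw [Set.indicator_of_notMem hω, hGdef]
        dsimp only
        rw [if_neg (fun h => hω ((hSsucc_iff k ω).2 h))]
    have e2 := fubini_step P μ hsupp A hmeas hindep hdist k G hGmeas _ hGbd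
    have e3 : ∀ ω, ∫ a, G (fun i : Fin k => A i ω, a) ∂μ ≤
        Set.indicator (S (k + 1))
          (fun ω => r * ‖kacIter x (fun i => A i ω) x0 k - x‖ ^ 2) ω := by
      intro ω
      by_cases hω : ω ∈ S (k + 1)
      · rw [Set.indicator_of_mem hω]
        have hgood : InnerProductGeometry.angle x (kacIter x (fun i => A i ω) x0 k) < θ :=
          hω k (by omega)
        have hcong : ∀ a, G (fun i : Fin k => A i ω, a) =
            ‖kacStep x a (kacIter x (fun i => A i ω) x0 k) - x‖ ^ 2 := by
          intro a; rw [hGdef]; dsimp only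
          rw [if_pos ((hSsucc_iff k ω).1 hω), XF_eq x x0 (fun i => A i ω) k]
        rw [integral_congr_ae (Filter.Eventually.of_forall hcong)]
        exact step_exp μ hsupp hθ' hACW hx hgood
      · rw [Set.indicator_of_notMem hω]
        have hcong : ∀ a, G (fun i : Fin k => A i ω, a) = 0 := by
          intro a; rw [hGdef]; dsimp only
          rw [if_neg (fun h => hω ((hSsucc_iff k ω).2 h))]
        rw [integral_congr_ae (Filter.Eventually.of_forall hcong)]
        simp
    have hind_int : Integrable (Set.indicator (S (k + 1))
        (fun ω => r * ‖kacIter x (fun i => A i ω) x0 k - x‖ ^ 2)) P :=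
      ((hXint k).const_mul r).indicator (hSmeas (k + 1))
    have e4 : ∫ ω, ∫ a, G (fun i : Fin k => A i ω, a) ∂μ ∂P ≤
        ∫ ω, Set.indicator (S (k + 1))
          (fun ω => r * ‖kacIter x (fun i => A i ω) x0 k - x‖ ^ 2) ω ∂P := by
      refine integral_mono_of_nonneg ?_ hind_int (Filter.Eventually.of_forall e3)
      exact Filter.Eventually.of_forall fun ω => integral_nonneg fun a => hGnn _
    have e5 : ∫ ω, Set.indicator (S (k + 1))
        (fun ω => r * ‖kacIter x (fun i => A i ω) x0 k - x‖ ^ 2) ω ∂P =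
        r * ∫ ω in S (k + 1), ‖kacIter x (fun i => A i ω) x0 k - x‖ ^ 2 ∂P := by
      rw [integral_indicator (hSmeas (k + 1)), integral_const_mul]
    have e6 : ∫ ω in S (k + 1), ‖kacIter x (fun i => A i ω) x0 k - x‖ ^ 2 ∂P ≤
        ∫ ω in S k, ‖kacIter x (fun i => A i ω) x0 k - x‖ ^ 2 ∂P :=
      setIntegral_mono_set ((hXint k).integrableOn)
        (Filter.Eventually.of_forall fun ω => sq_nonneg _)
        ((hSmono k).eventuallyLE)
    calc ∫ ω in S (k + 1), ‖kacIter x (fun i => A i ω) x0 (k + 1) - x‖ ^ 2 ∂P =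
        ∫ ω, ∫ a, G (fun i : Fin k => A i ω, a) ∂μ ∂P := by rw [e1, e2]
    _ ≤ r * ∫ ω in S (k + 1), ‖kacIter x (fun i => A i ω) x0 k - x‖ ^ 2 ∂P := by
        rw [← e5]; exact e4
    _ ≤ r * ∫ ω in S k, ‖kacIter x (fun i => A i ω) x0 k - x‖ ^ 2 ∂P :=
        mul_le_mul_of_nonneg_left e6 hr0
  have hpart1 : ∀ k : ℕ,
      ∫ ω in S k, ‖kacIter x (fun i => A i ω) x0 k - x‖ ^ 2 ∂P ≤ r ^ k * ‖x0 - x‖ ^ 2 := by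
    intro k
    induction k with
    | zero =>
      have hS0 : S 0 = Set.univ := by
        ext ω; simp only [hSdef, Set.mem_setOf_eq, Set.mem_univ, iff_true]
        intro j hj; omega
      rw [hS0, Measure.restrict_univ]
      have h0 : (fun ω => ‖kacIter x (fun i => A i ω) x0 0 - x‖ ^ 2) =
          fun _ => ‖x0 - x‖ ^ 2 := rfl
      rw [h0, integral_const, probReal_univ]
      simp
    | succ k ih =>
      calc ∫ ω in S (k + 1), ‖kacIter x (fun i => A i ω) x0 (k + 1) - x‖ ^ 2 ∂P ≤
          r * ∫ ω in S k, ‖kacIter x (fun i => A i ω) x0 k - x‖ ^ 2 ∂P := hkey k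
      _ ≤ r * (r ^ k * ‖x0 - x‖ ^ 2) := mul_le_mul_of_nonneg_left ih hr0
      _ = r ^ (k + 1) * ‖x0 - x‖ ^ 2 := by ring
  constructor
  · intro k
    calc ∫ ω in {ω | ∀ j : ℕ,
          InnerProductGeometry.angle x (kacIter x (fun i => A i ω) x0 j) < θ},
        ‖kacIter x (fun i => A i ω) x0 k - x‖ ^ 2 ∂P ≤
        ∫ ω in S k, ‖kacIter x (fun i => A i ω) x0 k - x‖ ^ 2 ∂P :=
          setIntegral_mono_set ((hXint k).integrableOn)
            (Filter.Eventually.of_forall fun ω => sq_nonneg _)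
            ((hEvS k).eventuallyLE)
    _ ≤ r ^ k * ‖x0 - x‖ ^ 2 := hpart1 k
  · -- Part 2: probability of escaping the cone
    have hsin : 0 < Real.sin θ :=
      Real.sin_pos_of_pos_of_lt_pi hθ (lt_trans hθ' (by linarith [Real.pi_pos]))
    -- the stopped second moments stay bounded
    have hE2 : ∀ k : ℕ, ∫ ω, ‖YF x x0 θ k (fun i : Fin k => A i ω) - x‖ ^ 2 ∂P ≤
        ‖x0 - x‖ ^ 2 := by
      intro k
      induction k with
      | zero =>
        have h0 : (fun ω : Ω => ‖YF x x0 θ 0 (fun i : Fin 0 => A i ω) - x‖ ^ 2) =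
            fun _ => ‖x0 - x‖ ^ 2 := rfl
        rw [h0, integral_const, probReal_univ]
        simp
      | succ k ih =>
        set G2 : (Fin k → Euc n) × Euc n → ℝ := fun p =>
          ‖stepY x θ p.2 (YF x x0 θ k p.1) - x‖ ^ 2 with hG2def
        have hG2meas : Measurable G2 := by
          have hpair : Measurable fun p : (Fin k → Euc n) × Euc n =>
              (p.2, YF x x0 θ k p.1) :=
            measurable_snd.prodMk ((measurable_YF x x0 θ k).comp measurable_fst)
          have hnorm : Measurable fun w : Euc n => ‖w - x‖ ^ 2 :=
            ((measurable_id.sub measurable_const).norm.pow measurable_const)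
          have he : G2 = (fun w : Euc n => ‖w - x‖ ^ 2) ∘
              ((fun q : Euc n × Euc n => stepY x θ q.1 q.2) ∘
                (fun p : (Fin k → Euc n) × Euc n => (p.2, YF x x0 θ k p.1))) := rfl
          rw [he]
          exact hnorm.comp ((measurable_stepY x θ).comp hpair)
        have hG2bd : ∀ v a, (∀ i, ‖v i‖ = 1) → ‖a‖ = 1 →
            |G2 (v, a)| ≤ ‖x0 - x‖ ^ 2 + 4 * (k + 1) * ‖x‖ ^ 2 := by
          intro v a hv ha
          rw [hG2def]; dsimp only
          rw [abs_of_nonneg (sq_nonneg _)]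
          have hb := YF_bound x x0 θ k v hv
          unfold stepY
          split
          · calc ‖kacStep x a (YF x x0 θ k v) - x‖ ^ 2 ≤
                ‖YF x x0 θ k v - x‖ ^ 2 + 4 * ‖x‖ ^ 2 := kacStep_crude _ _ _ ha
            _ ≤ ‖x0 - x‖ ^ 2 + 4 * (k + 1) * ‖x‖ ^ 2 := by push_cast; nlinarith [sq_nonneg ‖x‖]
          · push_cast; nlinarith [sq_nonneg ‖x‖]
        have f1 : ∫ ω, ‖YF x x0 θ (k + 1) (fun i : Fin (k + 1) => A i ω) - x‖ ^ 2 ∂P =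
            ∫ ω, G2 (fun i : Fin k => A i ω, A k ω) ∂P := by
          refine integral_congr_ae (Filter.Eventually.of_forall fun ω => ?_)
          exact congrArg (fun z : Euc n => ‖z - x‖ ^ 2) (YF_succ x x0 θ (fun i => A i ω) k)
        have f2 := fubini_step P μ hsupp A hmeas hindep hdist k G2 hG2meas _ hG2bd
        have f3 : ∀ ω, ∫ a, G2 (fun i : Fin k => A i ω, a) ∂μ ≤
            ‖YF x x0 θ k (fun i : Fin k => A i ω) - x‖ ^ 2 := by
          intro ω
          by_cases hg : InnerProductGeometry.angle x
              (YF x x0 θ k (fun i : Fin k => A i ω)) < θ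
          · have hcong : ∀ a, G2 (fun i : Fin k => A i ω, a) =
                ‖kacStep x a (YF x x0 θ k (fun i : Fin k => A i ω)) - x‖ ^ 2 := by
              intro a; rw [hG2def]; dsimp only; unfold stepY; rw [if_pos hg]
            rw [integral_congr_ae (Filter.Eventually.of_forall hcong)]
            calc ∫ a, ‖kacStep x a (YF x x0 θ k (fun i : Fin k => A i ω)) - x‖ ^ 2 ∂μ ≤
                (1 - α / n) * ‖YF x x0 θ k (fun i : Fin k => A i ω) - x‖ ^ 2 :=
                  step_exp μ hsupp hθ' hACW hx hg
            _ ≤ ‖YF x x0 θ k (fun i : Fin k => A i ω) - x‖ ^ 2 := by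
                nlinarith [sq_nonneg ‖YF x x0 θ k (fun i : Fin k => A i ω) - x‖]
          · have hcong : ∀ a, G2 (fun i : Fin k => A i ω, a) =
                ‖YF x x0 θ k (fun i : Fin k => A i ω) - x‖ ^ 2 := by
              intro a; rw [hG2def]; dsimp only; unfold stepY; rw [if_neg hg]
            rw [integral_congr_ae (Filter.Eventually.of_forall hcong), integral_const,
              probReal_univ]
            simp
        have f4 : ∫ ω, ∫ a, G2 (fun i : Fin k => A i ω, a) ∂μ ∂P ≤
            ∫ ω, ‖YF x x0 θ k (fun i : Fin k => A i ω) - x‖ ^ 2 ∂P := by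
          refine integral_mono_of_nonneg ?_ (hYint k) (Filter.Eventually.of_forall f3)
          exact Filter.Eventually.of_forall fun ω => integral_nonneg fun a => sq_nonneg _
        calc ∫ ω, ‖YF x x0 θ (k + 1) (fun i : Fin (k + 1) => A i ω) - x‖ ^ 2 ∂P =
            ∫ ω, ∫ a, G2 (fun i : Fin k => A i ω, a) ∂μ ∂P := by rw [f1, f2]
        _ ≤ ∫ ω, ‖YF x x0 θ k (fun i : Fin k => A i ω) - x‖ ^ 2 ∂P := f4
        _ ≤ ‖x0 - x‖ ^ 2 := ih
    -- bad events for the stopped process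
    set E : ℕ → Set Ω := fun k =>
      {ω | ¬ InnerProductGeometry.angle x (YF x x0 θ k (fun i : Fin k => A i ω)) < θ}
      with hEdef
    have hEmeas : ∀ k, MeasurableSet (E k) := by
      intro k
      have h : E k = ((fun ω => YF x x0 θ k (fun i : Fin k => A i ω)) ⁻¹' goodSet x θ)ᶜ := by
        ext ω; simp [hEdef, goodSet]
      rw [h]
      exact ((hYmeas k) (measurableSet_goodSet x θ)).compl
    have hEmono : ∀ k, E k ⊆ E (k + 1) := by
      intro k ω hω
      have h : YF x x0 θ (k + 1) (fun i : Fin (k + 1) => A i ω) =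
          YF x x0 θ k (fun i : Fin k => A i ω) := by
        rw [YF_succ x x0 θ (fun i => A i ω) k]
        unfold stepY
        rw [if_neg hω]
      simp only [hEdef, Set.mem_setOf_eq] at hω ⊢
      rw [h]
      exact hω
    have hsub : {ω | ∀ j : ℕ,
        InnerProductGeometry.angle x (kacIter x (fun i => A i ω) x0 j) < θ}ᶜ ⊆
        ⋃ k, E k := by
      intro ω hω
      rw [Set.mem_compl_iff] at hω
      simp only [Set.mem_setOf_eq, not_forall] at hω
      have hex : ∃ j, ¬ InnerProductGeometry.angle x (kacIter x (fun i => A i ω) x0 j) < θ :=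
        hω
      have hbad := Nat.find_spec hex
      have hminimal : ∀ i, i < Nat.find hex →
          InnerProductGeometry.angle x (kacIter x (fun i => A i ω) x0 i) < θ :=
        fun i hi => not_not.1 (Nat.find_min hex hi)
      have hYX : ∀ m, (∀ i, i < m →
          InnerProductGeometry.angle x (kacIter x (fun i => A i ω) x0 i) < θ) →
          YF x x0 θ m (fun i : Fin m => A i ω) = kacIter x (fun i => A i ω) x0 m := by
        intro m
        induction m with
        | zero => intro _; rfl
        | succ m ih =>
          intro hgood
          rw [YF_succ x x0 θ (fun i => A i ω) m, ih (fun i hi => hgood i (by omega))]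
          unfold stepY
          rw [if_pos (hgood m (by omega))]
          rfl
      refine Set.mem_iUnion.2 ⟨Nat.find hex, ?_⟩
      simp only [hEdef, Set.mem_setOf_eq]
      rw [hYX (Nat.find hex) hminimal]
      exact hbad
    have hchain : ∀ k, (‖x‖ * Real.sin θ) ^ 2 * (P (E k)).toReal ≤ δ ^ 2 * ‖x‖ ^ 2 := by
      intro k
      have h1 : ∫ _ω in E k, (‖x‖ * Real.sin θ) ^ 2 ∂P ≤
          ∫ ω in E k, ‖YF x x0 θ k (fun i : Fin k => A i ω) - x‖ ^ 2 ∂P := by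
        refine setIntegral_mono_on (integrableOn_const (measure_ne_top P _))
          ((hYint k).integrableOn) (hEmeas k) fun ω hω => ?_
        exact dist_ge_of_angle_ge hθ hθ' hω
      have h2 : ∫ ω in E k, ‖YF x x0 θ k (fun i : Fin k => A i ω) - x‖ ^ 2 ∂P ≤
          ∫ ω, ‖YF x x0 θ k (fun i : Fin k => A i ω) - x‖ ^ 2 ∂P :=
        setIntegral_le_integral (hYint k) (Filter.Eventually.of_forall fun ω => sq_nonneg _)
      have h3 : ∫ _ω in E k, (‖x‖ * Real.sin θ) ^ 2 ∂P =
          (P (E k)).toReal * (‖x‖ * Real.sin θ) ^ 2 := by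
        rw [setIntegral_const, smul_eq_mul]
        rfl
      have h4 : ‖x0 - x‖ ^ 2 ≤ δ ^ 2 * ‖x‖ ^ 2 := by
        nlinarith [norm_nonneg (x0 - x), mul_nonneg hδ.le (norm_nonneg x)]
      have h5 := hE2 k
      rw [mul_comm]
      linarith
    have hfinal : ∀ k, P (E k) ≤ ENNReal.ofReal ((δ / Real.sin θ) ^ 2) := by
      intro k
      have ht : (P (E k)).toReal ≤ (δ / Real.sin θ) ^ 2 := by
        have hcc := hchain k
        rw [div_pow, le_div_iff₀ (by positivity)]
        nlinarith [sq_nonneg ‖x‖, hxn, ENNReal.toReal_nonneg (a := P (E k)),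
          mul_pos (mul_pos hxn hxn) (mul_pos hsin hsin)]
      calc P (E k) = ENNReal.ofReal (P (E k)).toReal :=
            (ENNReal.ofReal_toReal (measure_ne_top P _)).symm
      _ ≤ _ := ENNReal.ofReal_le_ofReal ht
    calc P {ω | ∀ j : ℕ,
        InnerProductGeometry.angle x (kacIter x (fun i => A i ω) x0 j) < θ}ᶜ ≤
        P (⋃ k, E k) := measure_mono hsub
    _ = ⨆ k, P (E k) :=
        Directed.measure_iUnion (Monotone.directed_le (monotone_nat_of_le_succ hEmono))
    _ ≤ ENNReal.ofReal ((δ / Real.sin θ) ^ 2) := iSup_le hfinal
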